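/- arXiv:2404.06703 — 2 statements merged into one kernel-verified Lean document; each statement's English description precedes it below -/
import Mathlib

section
/- Let g ≥ 1 and let W be a nonempty closed subset of the probability simplex Δ_g. If for every S ∈ ℝ^g the infimum of w · S over w ∈ W equals min_{i ∈ {1,…,g}} S_i, then every standard basis vector e_i (i = 1,…,g) belongs to W. (Converse of the egalitarian characterization: an Angel whose worst-case payoff is egalitarian welfare must be able to target each individual.) -/
/-- Converse of the egalitarian characterization: if a nonempty closed Angel
action space `W ⊆ Δ_g` satisfies `inf_{w ∈ W} w · S = min_i S_i` for every
`S`, then every standard basis vector belongs to `W`. -/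
theorem egalitarian_converse (g : ℕ) (hg : 0 < g) (W : Set (Fin g → ℝ))
    (hWne : W.Nonempty) (hWclosed : IsClosed W)
    (hWsub : W ⊆ stdSimplex ℝ (Fin g))
    (h : ∀ S : Fin g → ℝ,
      sInf ((fun w => ∑ i, w i * S i) '' W)
        = Finset.univ.inf' ⟨⟨0, hg⟩, Finset.mem_univ _⟩ S) :
    ∀ i : Fin g, Pi.single i (1 : ℝ) ∈ W := by
  intro i
  have hWcomp : IsCompact W :=
    (isCompact_stdSimplex ℝ (Fin g)).of_isClosed_subset hWclosed hWsub
  set S : Fin g → ℝ := fun j => if j = i then 0 else 1 with hS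
  have hf : Continuous fun w : Fin g → ℝ => ∑ j, w j * S j :=
    continuous_finset_sum _ fun j _ => (continuous_apply j).mul continuous_const
  obtain ⟨w0, hw0W, hmin⟩ := hWcomp.exists_isMinOn hWne hf.continuousOn
  have hleast : IsLeast ((fun w => ∑ j, w j * S j) '' W) (∑ j, w0 j * S j) := by
    constructor
    · exact ⟨w0, hw0W, rfl⟩
    · rintro x ⟨w, hwW, rfl⟩
      exact hmin hwW
  have hinf0 : Finset.univ.inf' ⟨⟨0, hg⟩, Finset.mem_univ _⟩ S = 0 := by
    apply le_antisymm
    · have := Finset.inf'_le S (Finset.mem_univ i)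
      simpa [hS] using this
    · apply Finset.le_inf'
      intro j _
      by_cases hj : j = i <;> simp [hS, hj]
  have hfw0 : ∑ j, w0 j * S j = 0 := by
    have h' := h S
    rw [hleast.csInf_eq, hinf0] at h'
    exact h'
  obtain ⟨hnn, hsum⟩ := hWsub hw0W
  have hterm : ∀ j ∈ Finset.univ, w0 j * S j = 0 := by
    rw [← Finset.sum_eq_zero_iff_of_nonneg]
    · exact hfw0
    · intro j _
      apply mul_nonneg (hnn j)
      by_cases hj : j = i <;> simp [hS, hj]
  have hzero : ∀ j, j ≠ i → w0 j = 0 := by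
    intro j hj
    have := hterm j (Finset.mem_univ j)
    simpa [hS, hj] using this
  have hone : w0 i = 1 := by
    rw [← hsum, Finset.sum_eq_single i]
    · intro j _ hj; exact hzero j hj
    · intro hi; exact absurd (Finset.mem_univ i) hi
  have : w0 = Pi.single i 1 := by
    funext j
    by_cases hj : j = i
    · subst hj; simp [hone]
    · simp [Pi.single_eq_of_ne hj, hzero j hj]
  rwa [this] at hw0W
end

section
/- Let g ≥ 1, let p < 0, let w_min > 0, and let w ∈ Δ_g with w_i ≥ w_min for all i. Then for all S, S′ ∈ ℝ^g with all coordinates strictly positive, |M_p(S; w) − M_p(S′; w)| ≤ w_min^{−1/|p|} · ‖S − S′‖_∞. (Lipschitz continuity of negative-power weighted power means: when all weights are bounded below by w_min > 0, M_p(·; w) is (1/w_min^{1/|p|})-Lipschitz with respect to the supremum norm.) -/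
open Finset Real Set

/-- Key sum estimate: `∑ wᵢ yᵢ^(p-1) ≤ wmin^(1/p) * B^(1-1/p)` where `B = ∑ wᵢ yᵢ^p`. -/
lemma pm_aux_sum {g : ℕ} (hg : 0 < g) {p : ℝ} (hp : p < 0)
    {wmin : ℝ} (hwmin : 0 < wmin) {w : Fin g → ℝ} (hge : ∀ i, wmin ≤ w i)
    {y : Fin g → ℝ} (hy : ∀ i, 0 < y i) :
    ∑ i, w i * y i ^ (p - 1)
      ≤ wmin ^ (1 / p) * (∑ i, w i * y i ^ p) ^ (1 - 1 / p) := by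
  have hwpos : ∀ i, (0:ℝ) < w i := fun i => lt_of_lt_of_le hwmin (hge i)
  set B := ∑ i, w i * y i ^ p with hBdef
  have hBpos : 0 < B := by
    apply Finset.sum_pos (fun i _ => mul_pos (hwpos i) (Real.rpow_pos_of_pos (hy i) p))
    exact ⟨⟨0, hg⟩, Finset.mem_univ _⟩
  have hinvp : (1 : ℝ) / p < 0 := div_neg_of_pos_of_neg one_pos hp
  have key : ∀ i, w i * y i ^ (p - 1) ≤ wmin ^ (1/p) * B ^ (-(1/p)) * (w i * y i ^ p) := by
    intro i
    have h1 : w i * y i ^ p ≤ B := by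
      apply Finset.single_le_sum (f := fun j => w j * y j ^ p)
        (fun j _ => le_of_lt (mul_pos (hwpos j) (Real.rpow_pos_of_pos (hy j) p)))
        (Finset.mem_univ i)
    have h2 : y i ^ p ≤ B / w i := (le_div_iff₀ (hwpos i)).2 (by linarith [h1, mul_comm (w i) (y i ^ p)])
    have h3 : (y i ^ p) ^ (-(1/p)) ≤ (B / w i) ^ (-(1/p)) :=
      Real.rpow_le_rpow (le_of_lt (Real.rpow_pos_of_pos (hy i) p)) h2 (by linarith)
    have h4 : (B / w i) ^ (-(1/p)) = B ^ (-(1/p)) * w i ^ (1/p) := by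
      rw [Real.div_rpow hBpos.le (hwpos i).le, div_eq_mul_inv,
        ← Real.rpow_neg (hwpos i).le, neg_neg]
    have h5 : w i ^ (1/p) ≤ wmin ^ (1/p) :=
      Real.rpow_le_rpow_of_nonpos hwmin (hge i) hinvp.le
    have h6 : y i ^ (p - 1) = y i ^ p * (y i ^ p) ^ (-(1/p)) := by
      rw [← Real.rpow_mul (hy i).le, ← Real.rpow_add (hy i)]
      congr 1
      field_simp
      rw [eq_div_iff hp.ne]
      ring
    calc w i * y i ^ (p - 1) = (y i ^ p) ^ (-(1/p)) * (w i * y i ^ p) := by rw [h6]; ring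
      _ ≤ (B ^ (-(1/p)) * wmin ^ (1/p)) * (w i * y i ^ p) := by
          apply mul_le_mul_of_nonneg_right _
            (le_of_lt (mul_pos (hwpos i) (Real.rpow_pos_of_pos (hy i) p)))
          calc (y i ^ p) ^ (-(1/p)) ≤ (B / w i) ^ (-(1/p)) := h3
            _ = B ^ (-(1/p)) * w i ^ (1/p) := h4
            _ ≤ B ^ (-(1/p)) * wmin ^ (1/p) :=
                mul_le_mul_of_nonneg_left h5 (le_of_lt (Real.rpow_pos_of_pos hBpos _))
      _ = wmin ^ (1/p) * B ^ (-(1/p)) * (w i * y i ^ p) := by ring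
  calc ∑ i, w i * y i ^ (p - 1) ≤ ∑ i, wmin ^ (1/p) * B ^ (-(1/p)) * (w i * y i ^ p) :=
        Finset.sum_le_sum (fun i _ => key i)
    _ = wmin ^ (1/p) * (B ^ (-(1/p)) * B) := by rw [← Finset.mul_sum]; ring
    _ = wmin ^ (1/p) * B ^ (1 - 1/p) := by
        congr 1
        nth_rewrite 2 [← Real.rpow_one B]
        rw [← Real.rpow_add hBpos]
        ring_nf

/-- Shift estimate: `M_p(x + T·1) ≤ M_p(x) + wmin^(1/p) * T`. -/
lemma pm_aux_shift {g : ℕ} (hg : 0 < g) {p : ℝ} (hp : p < 0)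
    {wmin : ℝ} (hwmin : 0 < wmin) {w : Fin g → ℝ} (hge : ∀ i, wmin ≤ w i)
    {x : Fin g → ℝ} (hx : ∀ i, 0 < x i) {T : ℝ} (hT : 0 ≤ T) :
    (∑ i, w i * (x i + T) ^ p) ^ (1 / p)
      ≤ (∑ i, w i * x i ^ p) ^ (1 / p) + wmin ^ (1 / p) * T := by
  have hwpos : ∀ i, (0:ℝ) < w i := fun i => lt_of_lt_of_le hwmin (hge i)
  set f : ℝ → ℝ := fun t => (∑ i, w i * (x i + t) ^ p) ^ (1 / p) with hf
  set f' : ℝ → ℝ := fun t =>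
    (∑ i, w i * (x i + t) ^ p) ^ (1 / p - 1) * ∑ i, w i * (x i + t) ^ (p - 1) with hf'
  have hxt : ∀ t : ℝ, 0 ≤ t → ∀ i, 0 < x i + t := fun t ht i => by linarith [hx i]
  have hBpos : ∀ t : ℝ, 0 ≤ t → 0 < ∑ i, w i * (x i + t) ^ p := by
    intro t ht
    apply Finset.sum_pos
      (fun i _ => mul_pos (hwpos i) (Real.rpow_pos_of_pos (hxt t ht i) p))
    exact ⟨⟨0, hg⟩, Finset.mem_univ _⟩
  have hderiv : ∀ t ∈ Icc (0:ℝ) T, HasDerivAt f (f' t) t := by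
    intro t ht
    have hB : HasDerivAt (fun t => ∑ i, w i * (x i + t) ^ p)
        (∑ i, w i * (p * (x i + t) ^ (p - 1))) t := by
      apply HasDerivAt.fun_sum
      intro i _
      have h1 : HasDerivAt (fun t : ℝ => x i + t) 1 t := (hasDerivAt_id t).const_add (x i)
      have h2 : HasDerivAt (fun u : ℝ => u ^ p) (p * (x i + t) ^ (p - 1)) (x i + t) :=
        Real.hasDerivAt_rpow_const (Or.inl (hxt t ht.1 i).ne')
      have := (h2.comp t h1).const_mul (w i)
      simpa [Function.comp] using this
    have h3 : HasDerivAt (fun u : ℝ => u ^ (1/p))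
        ((1/p) * (∑ i, w i * (x i + t) ^ p) ^ (1/p - 1)) (∑ i, w i * (x i + t) ^ p) :=
      Real.hasDerivAt_rpow_const (Or.inl (hBpos t ht.1).ne')
    have h4 := h3.comp t hB
    have h5 : ∑ i, w i * (p * (x i + t) ^ (p - 1)) = p * ∑ i, w i * (x i + t) ^ (p - 1) := by
      rw [Finset.mul_sum]; exact Finset.sum_congr rfl (fun i _ => by ring)
    have h6 : (1/p) * (∑ i, w i * (x i + t) ^ p) ^ (1/p - 1)
        * (p * ∑ i, w i * (x i + t) ^ (p - 1)) = f' t := by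
      rw [hf']
      field_simp
      rw [mul_assoc, mul_comm p, mul_div_assoc, div_self hp.ne, mul_one]
    rw [h5] at h4
    rw [← h6]
    simpa [Function.comp_def, hf] using h4
  have hbound : ∀ t ∈ Ico (0:ℝ) T, ‖f' t‖ ≤ wmin ^ (1/p) := by
    intro t ht
    have hB := hBpos t ht.1
    have hsum := pm_aux_sum hg hp hwmin hge (y := fun i => x i + t) (hxt t ht.1)
    have hnn : 0 ≤ f' t := by
      apply mul_nonneg (le_of_lt (Real.rpow_pos_of_pos hB _))
      exact Finset.sum_nonneg fun i _ =>
        mul_nonneg (hwpos i).le (Real.rpow_pos_of_pos (hxt t ht.1 i) _).le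
    rw [Real.norm_of_nonneg hnn, hf']
    calc (∑ i, w i * (x i + t) ^ p) ^ (1/p - 1) * ∑ i, w i * (x i + t) ^ (p - 1)
        ≤ (∑ i, w i * (x i + t) ^ p) ^ (1/p - 1)
          * (wmin ^ (1/p) * (∑ i, w i * (x i + t) ^ p) ^ (1 - 1/p)) :=
          mul_le_mul_of_nonneg_left hsum (le_of_lt (Real.rpow_pos_of_pos hB _))
      _ = wmin ^ (1/p) := by
          rw [mul_comm, mul_assoc, ← Real.rpow_add hB]
          norm_num
  have := norm_image_sub_le_of_norm_deriv_le_segment'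
    (fun t ht => (hderiv t ht).hasDerivWithinAt) hbound T (right_mem_Icc.2 hT)
  rw [Real.norm_eq_abs] at this
  have h0 : f 0 = (∑ i, w i * x i ^ p) ^ (1 / p) := by simp [hf]
  have hfin : f T - f 0 ≤ wmin ^ (1/p) * T := by
    have := (abs_le.1 this).2
    simpa using this
  rw [h0] at hfin
  calc (∑ i, w i * (x i + T) ^ p) ^ (1/p) = f T := rfl
    _ ≤ (∑ i, w i * x i ^ p) ^ (1/p) + wmin ^ (1/p) * T := by linarith

/-- Lipschitz continuity of negative-power weighted power means: for `p < 0`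
and weights bounded below by `w_min > 0`, `M_p(·; w)` is
`w_min ^ (−1/|p|)`-Lipschitz with respect to the supremum norm on vectors
with strictly positive coordinates. -/
theorem power_mean_lipschitz_neg_p (g : ℕ) (hg : 0 < g) (p : ℝ) (hp : p < 0)
    (wmin : ℝ) (hwmin : 0 < wmin) (w : Fin g → ℝ)
    (hw : w ∈ stdSimplex ℝ (Fin g)) (hge : ∀ i, wmin ≤ w i)
    (S S' : Fin g → ℝ) (hS : ∀ i, 0 < S i) (hS' : ∀ i, 0 < S' i) :
    |(∑ i, w i * S i ^ p) ^ (1 / p) - (∑ i, w i * S' i ^ p) ^ (1 / p)|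
      ≤ wmin ^ (-(1 / |p|))
        * Finset.univ.sup' ⟨⟨0, hg⟩, Finset.mem_univ _⟩
            (fun i => |S i - S' i|) := by
  have hwpos : ∀ i, (0:ℝ) < w i := fun i => lt_of_lt_of_le hwmin (hge i)
  have hinvp : (1:ℝ)/p < 0 := div_neg_of_pos_of_neg one_pos hp
  have hE : -(1 / |p|) = 1/p := by rw [abs_of_neg hp, div_neg, neg_neg]
  rw [hE]
  set t := Finset.univ.sup' ⟨⟨0, hg⟩, Finset.mem_univ _⟩ (fun i => |S i - S' i|) with htdef
  have hti : ∀ i, |S i - S' i| ≤ t := fun i =>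
    Finset.le_sup' (fun i => |S i - S' i|) (Finset.mem_univ i)
  have ht0 : (0:ℝ) ≤ t := le_trans (abs_nonneg _) (hti ⟨0, hg⟩)
  have main : ∀ a b : Fin g → ℝ, (∀ i, 0 < a i) → (∀ i, 0 < b i) → (∀ i, a i ≤ b i + t) →
      (∑ i, w i * a i ^ p) ^ (1/p) ≤ (∑ i, w i * b i ^ p) ^ (1/p) + wmin ^ (1/p) * t := by
    intro a b ha hb hab
    have hbt : ∀ i, 0 < b i + t := fun i => by linarith [hb i]
    have hmono : (∑ i, w i * a i ^ p) ^ (1/p) ≤ (∑ i, w i * (b i + t) ^ p) ^ (1/p) := by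
      apply Real.rpow_le_rpow_of_nonpos _ _ hinvp.le
      · apply Finset.sum_pos
          (fun i _ => mul_pos (hwpos i) (Real.rpow_pos_of_pos (hbt i) p))
        exact ⟨⟨0, hg⟩, Finset.mem_univ _⟩
      · apply Finset.sum_le_sum
        intro i _
        exact mul_le_mul_of_nonneg_left
          (Real.rpow_le_rpow_of_nonpos (ha i) (hab i) hp.le) (hwpos i).le
    exact le_trans hmono (pm_aux_shift hg hp hwmin hge hb ht0)
  rw [abs_sub_le_iff]
  constructor
  · have h1 := main S S' hS hS' (fun i => by linarith [(abs_le.1 (hti i)).2])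
    linarith
  · have h2 := main S' S hS' hS (fun i => by linarith [(abs_le.1 (hti i)).1])
    linarith
end
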